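/- Let a, b > 0. Then for all s, t with 0 < s < t, the inequality (t-s)^{-d/2} exp(-a·r²/(t-s)) · (r²/s)^{d/2} exp(-a·r²/s) · s^{-1} ≤ C·t^{-d/2-1}·exp(-c·r²/t)·exp(-c·r²/s) holds for all r > 2C₀ t^{1/2}, where C, c > 0 depend only on a, d, C₀. -/

import Mathlib

open Real

lemma rpow_mul_exp_neg_le {y p : ℝ} (hy : 0 ≤ y) (hp : 0 < p) :
    y ^ p * Real.exp (-y) ≤ p ^ p := by
  have h1 : y / p ≤ Real.exp (y / p) := by
    have := Real.add_one_le_exp (y / p)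
    linarith
  have h2 : y ^ p ≤ p ^ p * Real.exp y := by
    have hyp : y = p * (y / p) := by field_simp
    calc y ^ p = (p * (y / p)) ^ p := by rw [← hyp]
      _ = p ^ p * (y / p) ^ p := Real.mul_rpow hp.le (div_nonneg hy hp.le)
      _ ≤ p ^ p * (Real.exp (y / p)) ^ p := by gcongr
      _ = p ^ p * Real.exp y := by
          rw [← Real.exp_one_rpow (y / p), ← Real.rpow_mul (Real.exp_pos 1).le,
            Real.exp_one_rpow, div_mul_cancel₀ _ hp.ne']
  calc y ^ p * Real.exp (-y) ≤ p ^ p * Real.exp y * Real.exp (-y) := by gcongr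
    _ = p ^ p := by rw [mul_assoc, ← Real.exp_add, add_neg_cancel, Real.exp_zero, mul_one]

lemma key_bound {p b R x : ℝ} (hp : 0 < p) (hb : 0 < b) (hR : 0 < R) (hx : 0 < x) :
    x ^ (-p) * Real.exp (-(b * R / x)) ≤ (p / b) ^ p * R ^ (-p) := by
  set y := b * R / x with hy
  have hy0 : 0 < y := by positivity
  have e1 : x ^ (-p) = y ^ p * (b * R) ^ (-p) := by
    have hxi : y / (b * R) = x⁻¹ := by field_simp [hy]; rw [hy, div_mul_cancel₀ _ hx.ne']
    rw [Real.rpow_neg (by positivity : (0:ℝ) ≤ b*R), ← div_eq_mul_inv,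
      ← Real.div_rpow hy0.le (by positivity : (0:ℝ) ≤ b*R), hxi,
      ← Real.rpow_neg_one x, ← Real.rpow_mul hx.le]
    norm_num
  have e2 : (p / b) ^ p * R ^ (-p) = p ^ p * (b * R) ^ (-p) := by
    rw [Real.div_rpow hp.le hb.le, Real.rpow_neg (by positivity : (0:ℝ) ≤ b*R),
      Real.mul_rpow hb.le hR.le, Real.rpow_neg hR.le]
    field_simp
  rw [e1, e2, mul_right_comm]
  gcongr
  exact rpow_mul_exp_neg_le hy0.le hp

theorem convolution_kernel_inequality (d : ℕ) (hd : 1 ≤ d) (a C₀ : ℝ)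
    (ha : 0 < a) (hC₀ : 0 < C₀) :
    ∃ C c : ℝ, 0 < C ∧ 0 < c ∧
      ∀ r s t : ℝ, 0 < s → s < t → r > 2 * C₀ * Real.sqrt t →
        (t - s) ^ (-(d : ℝ) / 2) * Real.exp (-a * r ^ 2 / (t - s)) *
            (r ^ 2 / s) ^ ((d : ℝ) / 2) * Real.exp (-a * r ^ 2 / s) * s⁻¹ ≤
          C * t ^ (-(d : ℝ) / 2 - 1) * Real.exp (-c * r ^ 2 / t) *
            Real.exp (-c * r ^ 2 / s) := by
  have hd1 : (1:ℝ) ≤ (d:ℝ) := by exact_mod_cast hd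
  set p : ℝ := (d:ℝ)/2 with hpdef
  have hp : 0 < p := by rw [hpdef]; linarith
  have hp1 : (0:ℝ) < p + 1 := by linarith
  have ha2 : (0:ℝ) < a/2 := by linarith
  refine ⟨(p/(a/2))^p * ((p+1)/(a/2))^(p+1) * (4*C₀^2)^(-(p+1)), a/2,
    by positivity, by positivity, ?_⟩
  intro r s t hs hst hr
  have ht : 0 < t := hs.trans hst
  have hts : 0 < t - s := sub_pos.2 hst
  have hr0 : 0 < r := lt_trans (by positivity) hr
  have hR : 0 < r ^ 2 := by positivity
  have hrt : 4 * C₀ ^ 2 * t ≤ r ^ 2 := by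
    have h1 : (2 * C₀ * Real.sqrt t) * (2 * C₀ * Real.sqrt t) < r * r :=
      mul_self_lt_mul_self (by positivity) hr
    have h2 : Real.sqrt t * Real.sqrt t = t := Real.mul_self_sqrt ht.le
    nlinarith
  set E := Real.exp (-(a/2 * r^2 / (t-s))) with hE
  set F := Real.exp (-(a/2 * r^2 / s)) with hF
  have h1 : (t-s) ^ (-p) * E ≤ (p/(a/2))^p * (r^2:ℝ)^(-p) := key_bound hp ha2 hR hts
  have h2 : s ^ (-(p+1)) * F ≤ ((p+1)/(a/2))^(p+1) * (r^2:ℝ)^(-(p+1)) :=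
    key_bound hp1 ha2 hR hs
  have h3 : E ≤ Real.exp (-(a/2 * r^2 / t)) := by
    rw [hE, Real.exp_le_exp, neg_le_neg_iff]
    gcongr
    linarith
  have h4 : (r^2:ℝ) ^ (-(p+1)) ≤ (4*C₀^2)^(-(p+1)) * t^(-(p+1)) := by
    rw [← Real.mul_rpow (by positivity) ht.le]
    exact Real.rpow_le_rpow_of_nonpos (by positivity) hrt (by linarith)
  have hcancel : (r^2:ℝ)^(-p) * (r^2:ℝ)^p = 1 := by
    rw [← Real.rpow_add hR]; norm_num
  have e0 : -(d:ℝ)/2 - 1 = -(p+1) := by rw [hpdef]; ring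
  have e0' : -(d:ℝ)/2 = -p := by rw [hpdef]; ring
  rw [e0, e0']
  have hEE : Real.exp (-a*r^2/(t-s)) = E * E := by
    rw [hE, ← Real.exp_add]; congr 1; ring
  have hFF : Real.exp (-a*r^2/s) = F * F := by
    rw [hF, ← Real.exp_add]; congr 1; ring
  calc (t - s) ^ (-p) * Real.exp (-a * r ^ 2 / (t - s)) *
          (r ^ 2 / s) ^ p * Real.exp (-a * r ^ 2 / s) * s⁻¹
      = ((t-s)^(-p) * E) * E * ((r^2:ℝ)^p) * (s^(-(p+1)) * F) * F := by
        rw [hEE, hFF, Real.div_rpow hR.le hs.le, div_eq_mul_inv, ← Real.rpow_neg hs.le,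
          show s⁻¹ = s ^ (-1:ℝ) from (Real.rpow_neg_one s).symm,
          show -(p+1) = -p + -1 by ring, Real.rpow_add hs]
        ring
    _ ≤ ((p/(a/2))^p * (r^2:ℝ)^(-p)) * Real.exp (-(a/2 * r^2 / t)) * ((r^2:ℝ)^p) *
          (((p+1)/(a/2))^(p+1) * (r^2:ℝ)^(-(p+1))) * F := by
        gcongr
    _ = (p/(a/2))^p * ((p+1)/(a/2))^(p+1) * ((r^2:ℝ)^(-(p+1))) *
          Real.exp (-(a/2 * r^2 / t)) * F := by
        linear_combination (Real.exp (-(a/2 * r^2 / t)) * F * (p/(a/2))^p *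
          ((p+1)/(a/2))^(p+1) * (r^2:ℝ)^(-(p+1))) * hcancel
    _ ≤ (p/(a/2))^p * ((p+1)/(a/2))^(p+1) * ((4*C₀^2)^(-(p+1)) * t^(-(p+1))) *
          Real.exp (-(a/2 * r^2 / t)) * F := by
        gcongr
    _ = (p/(a/2))^p * ((p+1)/(a/2))^(p+1) * (4*C₀^2)^(-(p+1)) * t ^ (-(p+1)) *
          Real.exp (-(a/2) * r ^ 2 / t) * Real.exp (-(a/2) * r ^ 2 / s) := by
        rw [hF, show -(a/2 * r^2 / t) = -(a/2) * r^2 / t from by ring,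
          show -(a/2 * r^2 / s) = -(a/2) * r^2 / s from by ring]
        ring
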